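/- arXiv:1606.00289 — 3 statements merged into one kernel-verified Lean document; each statement's English description precedes it below -/
import Mathlib

section
/- Let G be a directed graph on vertices {1,...,N} with adjacency matrix A. For all distinct vertices i, j, the number of open simple paths of length k from i to j equals ∑_{S ⊆ V, S ≠ ∅} C(N−|S|, k+1−|S|)·(−1)^{k+1−|S|}·((A_S)^k)_{ij}, where A_S is the restriction of A to S and C(n,m) = 0 when m < 0 or m > n. -/
open scoped Classical

/-- Binomial coefficient with integer arguments, zero outside `0 ≤ k ≤ n`. -/
def Ibinom (n k : ℤ) : ℤ := if 0 ≤ k ∧ k ≤ n then (n.toNat).choose k.toNat else 0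

/-- Restriction of a matrix to a subset of indices (zero outside `S × S`). -/
def restrict {N : ℕ} (M : Matrix (Fin N) (Fin N) ℤ) (S : Finset (Fin N)) :
    Matrix (Fin N) (Fin N) ℤ :=
  fun i j => if i ∈ S ∧ j ∈ S then M i j else 0

lemma pow_apply_walks {N : ℕ} (M : Matrix (Fin N) (Fin N) ℤ) :
    ∀ (k : ℕ) (i j : Fin N), (M ^ k) i j =
      ∑ w : Fin (k + 1) → Fin N,
        if w 0 = i ∧ w (Fin.last k) = j then ∏ m : Fin k, M (w m.castSucc) (w m.succ) else 0 := by
  intro k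
  induction k with
  | zero =>
    intro i j
    have h := Fintype.sum_equiv (Equiv.funUnique (Fin 1) (Fin N))
      (fun w : Fin 1 → Fin N =>
        if w 0 = i ∧ w (Fin.last 0) = j then ∏ m : Fin 0, M (w m.castSucc) (w m.succ) else 0)
      (fun x : Fin N => if x = i ∧ x = j then 1 else 0)
      (by intro w; simp [Fin.last, Equiv.funUnique])
    show (1 : Matrix (Fin N) (Fin N) ℤ) i j = ∑ w : Fin 1 → Fin N,
        if w 0 = i ∧ w (Fin.last 0) = j then ∏ m : Fin 0, M (w m.castSucc) (w m.succ) else 0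
    rw [h]
    by_cases hij : i = j
    · subst hij; simp [Matrix.one_apply]
    · rw [Matrix.one_apply_ne hij]
      rw [Finset.sum_eq_zero]
      rintro x -
      rw [if_neg]
      rintro ⟨rfl, rfl⟩
      exact hij rfl
  | succ k ih =>
    intro i j
    have h := Fintype.sum_equiv (Fin.snocEquiv (fun _ : Fin (k + 1 + 1) => Fin N))
      (fun p : Fin N × (Fin (k + 1) → Fin N) =>
        if p.2 0 = i ∧ p.1 = j then
          (∏ m : Fin k, M (p.2 m.castSucc) (p.2 m.succ)) * M (p.2 (Fin.last k)) p.1 else 0)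
      (fun w : Fin (k + 1 + 1) → Fin N =>
        if w 0 = i ∧ w (Fin.last (k + 1)) = j then
          ∏ m : Fin (k + 1), M (w m.castSucc) (w m.succ) else 0)
      ?_
    · rw [pow_succ, Matrix.mul_apply]
      simp_rw [ih]
      rw [← h, Fintype.sum_prod_type]
      -- middle form: ∑ w', if w' 0 = i then (∏ ...) * M (w' last) j else 0
      trans ∑ w' : Fin (k + 1) → Fin N,
          (if w' 0 = i then (∏ m : Fin k, M (w' m.castSucc) (w' m.succ)) * M (w' (Fin.last k)) j
           else 0)
      · simp_rw [Finset.sum_mul, ite_mul, zero_mul]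
        rw [Finset.sum_comm]
        refine Finset.sum_congr rfl fun w' _ => ?_
        by_cases hw : w' 0 = i
        · simp only [hw, true_and]
          rw [Finset.sum_ite_eq]
          simp
        · simp [hw]
      · rw [Finset.sum_comm]
        refine Finset.sum_congr rfl fun w' _ => ?_
        by_cases hw : w' 0 = i
        · simp only [hw, true_and]
          rw [Finset.sum_ite_eq']
          simp
        · simp [hw]
    · rintro ⟨x, w'⟩
      simp only [Fin.snocEquiv_apply]
      have h0 : (Fin.snoc w' x : Fin (k + 1 + 1) → Fin N) 0 = w' 0 := by
        rw [← Fin.castSucc_zero, Fin.snoc_castSucc]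
      have hl : (Fin.snoc w' x : Fin (k + 1 + 1) → Fin N) (Fin.last (k + 1)) = x :=
        Fin.snoc_last _ _
      rw [h0, hl, Fin.prod_univ_castSucc]
      by_cases hc : w' 0 = i ∧ x = j
      · rw [if_pos hc, if_pos hc]
        simp [Fin.snoc_castSucc, Fin.snoc_last, Fin.succ_castSucc, Fin.succ_last, -Fin.castSucc_succ]
      · rw [if_neg hc, if_neg hc]

lemma restrict_pow_apply {N : ℕ} (E : Fin N → Fin N → Prop) (A : Matrix (Fin N) (Fin N) ℤ)
    (hA : ∀ i j, A i j = if E i j then 1 else 0) (S : Finset (Fin N)) (k : ℕ) (hk : 1 ≤ k)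
    (i j : Fin N) :
    (restrict A S ^ k) i j = ∑ w : Fin (k + 1) → Fin N,
      if w 0 = i ∧ w (Fin.last k) = j ∧ (∀ m : Fin k, E (w m.castSucc) (w m.succ)) ∧
         (∀ t, w t ∈ S) then 1 else 0 := by
  rw [pow_apply_walks]
  refine Finset.sum_congr rfl fun w _ => ?_
  have key : (∀ m : Fin k, ((w m.castSucc ∈ S ∧ w m.succ ∈ S) ∧ E (w m.castSucc) (w m.succ))) ↔
      ((∀ m : Fin k, E (w m.castSucc) (w m.succ)) ∧ ∀ t, w t ∈ S) := by
    constructor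
    · intro h
      refine ⟨fun m => (h m).2, fun t => ?_⟩
      by_cases ht : (t : ℕ) < k
      · have : t = (⟨(t : ℕ), ht⟩ : Fin k).castSucc := by
          apply Fin.ext; rfl
        rw [this]; exact (h _).1.1
      · have hlt := t.isLt
        have htv : (t : ℕ) = k := by omega
        have : t = (⟨k - 1, by omega⟩ : Fin k).succ := by
          apply Fin.ext; simp [htv]; omega
        rw [this]; exact (h _).1.2
    · rintro ⟨h1, h2⟩ m
      exact ⟨⟨h2 _, h2 _⟩, h1 m⟩
  have hprod : (∏ m : Fin k, restrict A S (w m.castSucc) (w m.succ)) =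
      if ((∀ m : Fin k, E (w m.castSucc) (w m.succ)) ∧ ∀ t, w t ∈ S) then 1 else 0 := by
    have : ∀ m : Fin k, restrict A S (w m.castSucc) (w m.succ) =
        if ((w m.castSucc ∈ S ∧ w m.succ ∈ S) ∧ E (w m.castSucc) (w m.succ)) then 1 else 0 := by
      intro m
      unfold restrict
      rw [hA]
      by_cases h1 : w m.castSucc ∈ S ∧ w m.succ ∈ S <;>
        by_cases h2 : E (w m.castSucc) (w m.succ) <;> simp [h1, h2]
    rw [Finset.prod_congr rfl (fun m _ => this m), Fintype.prod_boole]
    simp only [key]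
  by_cases h1 : w 0 = i ∧ w (Fin.last k) = j
  · rw [if_pos h1, hprod]
    by_cases h2 : (∀ m : Fin k, E (w m.castSucc) (w m.succ)) ∧ ∀ t, w t ∈ S
    · rw [if_pos h2, if_pos ⟨h1.1, h1.2, h2.1, h2.2⟩]
    · rw [if_neg h2, if_neg (by tauto)]
  · rw [if_neg h1, if_neg (by tauto)]

lemma superset_sum {N : ℕ} (T : Finset (Fin N)) (f : ℕ → ℤ) :
    ∑ S ∈ Finset.univ.powerset.filter (fun S : Finset (Fin N) => T ⊆ S), f S.card
      = ∑ m ∈ Finset.range ((N - T.card) + 1),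
          ((N - T.card).choose m : ℤ) * f (T.card + m) := by
  have h1 : ∑ S ∈ Finset.univ.powerset.filter (fun S : Finset (Fin N) => T ⊆ S), f S.card
      = ∑ U ∈ Tᶜ.powerset, f (T.card + U.card) := by
    refine Finset.sum_nbij' (fun S => S \ T) (fun U => T ∪ U) ?_ ?_ ?_ ?_ ?_
    · intro S hS
      simp only [Finset.mem_filter, Finset.mem_powerset] at hS ⊢
      intro x hx
      simp only [Finset.mem_sdiff] at hx
      simp [hx.2]
    · intro U hU
      simp only [Finset.mem_powerset] at hU
      simp only [Finset.mem_filter, Finset.mem_powerset]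
      exact ⟨Finset.subset_univ _, Finset.subset_union_left⟩
    · intro S hS
      simp only [Finset.mem_filter, Finset.mem_powerset] at hS
      exact Finset.union_sdiff_of_subset hS.2
    · intro U hU
      simp only [Finset.mem_powerset] at hU
      apply Finset.union_sdiff_cancel_left
      exact Disjoint.mono_right hU disjoint_compl_right
    · intro S hS
      simp only [Finset.mem_filter, Finset.mem_powerset] at hS
      congr 1
      rw [Finset.card_sdiff_of_subset hS.2]
      have := Finset.card_le_card hS.2
      omega
  rw [h1]
  have h2 := Finset.sum_powerset_apply_card (fun m => f (T.card + m)) (x := Tᶜ)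
  rw [h2, Finset.card_compl, Fintype.card_fin]
  refine Finset.sum_congr rfl fun m _ => ?_
  rw [nsmul_eq_mul]

lemma arith (N k t : ℕ) (ht2 : t ≤ k + 1) (htN : t ≤ N) :
    ∑ m ∈ Finset.range (N - t + 1), ((N - t).choose m : ℤ) *
      (Ibinom ((N : ℤ) - (t + m : ℕ)) ((k : ℤ) + 1 - (t + m : ℕ)) *
        (-1) ^ (((k : ℤ) + 1 - (t + m : ℕ)).toNat))
    = if t = k + 1 then 1 else 0 := by
  by_cases hN : k + 1 ≤ N
  · set n := N - t with hn
    set r := k + 1 - t with hr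
    have hrn : r ≤ n := by omega
    have hstep : ∑ m ∈ Finset.range (N - t + 1), ((N - t).choose m : ℤ) *
        (Ibinom ((N : ℤ) - (t + m : ℕ)) ((k : ℤ) + 1 - (t + m : ℕ)) *
          (-1) ^ (((k : ℤ) + 1 - (t + m : ℕ)).toNat))
        = ∑ m ∈ Finset.range (r + 1),
            ((n.choose r : ℤ) * (r.choose m : ℤ)) * ((-1) ^ r * (-1) ^ m) := by
      rw [← Finset.sum_subset (Finset.range_subset_range.2 (by omega : r + 1 ≤ n + 1))]
      · refine Finset.sum_congr rfl fun m hm => ?_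
        rw [Finset.mem_range] at hm
        have hmr : m ≤ r := by omega
        have e1 : (N : ℤ) - (t + m : ℕ) = ((n - m : ℕ) : ℤ) := by push_cast; omega
        have e2 : (k : ℤ) + 1 - (t + m : ℕ) = ((r - m : ℕ) : ℤ) := by push_cast; omega
        rw [e1, e2]
        have e3 : Ibinom ((n - m : ℕ) : ℤ) ((r - m : ℕ) : ℤ) = ((n - m).choose (r - m) : ℤ) := by
          unfold Ibinom
          rw [if_pos ⟨Int.natCast_nonneg _, by exact_mod_cast Nat.sub_le_sub_right hrn m⟩]
          simp [Int.toNat_natCast]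
        rw [e3, Int.toNat_natCast]
        have e4 : (n.choose m : ℤ) * ((n - m).choose (r - m) : ℤ)
            = (n.choose r : ℤ) * (r.choose m : ℤ) := by
          have := Nat.choose_mul (n := n) (k := r) (s := m) hmr
          exact_mod_cast this.symm
        have e5 : ((-1 : ℤ)) ^ (r - m) = (-1) ^ r * (-1) ^ m := by
          have h6 : ((-1 : ℤ)) ^ r = (-1) ^ (r - m) * (-1) ^ m := by
            rw [← pow_add, Nat.sub_add_cancel hmr]
          have h7 : ((-1 : ℤ)) ^ m * (-1) ^ m = 1 := by
            rw [← pow_add]; exact Even.neg_one_pow ⟨m, rfl⟩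
          calc ((-1 : ℤ)) ^ (r - m) = (-1) ^ (r - m) * ((-1) ^ m * (-1) ^ m) := by
                rw [h7, mul_one]
            _ = (-1) ^ r * (-1) ^ m := by rw [h6]; ring
        rw [e5, ← hn]
        ring_nf
        rw [mul_comm ((n.choose m : ℤ)) _, mul_assoc]
        rw [show ((n - m).choose (r - m) : ℤ) * (n.choose m : ℤ)
            = (n.choose r : ℤ) * (r.choose m : ℤ) by rw [← e4]; ring]
        ring
      · intro m hm hm2
        rw [Finset.mem_range] at hm hm2
        have : ¬ (0 ≤ (k : ℤ) + 1 - (t + m : ℕ) ∧ (k : ℤ) + 1 - (t + m : ℕ) ≤ (N : ℤ) - (t + m : ℕ)) := by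
          push_cast
          omega
        unfold Ibinom
        rw [if_neg this]
        ring
    rw [hstep]
    have : ∑ m ∈ Finset.range (r + 1), ((n.choose r : ℤ) * (r.choose m : ℤ)) * ((-1) ^ r * (-1) ^ m)
        = (n.choose r : ℤ) * (-1) ^ r * ∑ m ∈ Finset.range (r + 1), ((-1 : ℤ)) ^ m * (r.choose m : ℤ) := by
      rw [Finset.mul_sum]
      refine Finset.sum_congr rfl fun m _ => by ring
    rw [this, Int.alternating_sum_range_choose]
    by_cases hr0 : r = 0
    · rw [if_pos hr0, if_pos (by omega)]
      simp [hr0]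
    · rw [if_neg hr0, if_neg (by omega)]
      ring
  · rw [if_neg (by omega)]
    refine Finset.sum_eq_zero fun m hm => ?_
    have : ¬ (0 ≤ (k : ℤ) + 1 - (t + m : ℕ) ∧ (k : ℤ) + 1 - (t + m : ℕ) ≤ (N : ℤ) - (t + m : ℕ)) := by
      push_cast
      omega
    unfold Ibinom
    rw [if_neg this]
    ring

theorem stmt5 (N : ℕ) (E : Fin N → Fin N → Prop)
    (A : Matrix (Fin N) (Fin N) ℤ) (hA : ∀ i j, A i j = if E i j then 1 else 0)
    (k : ℕ) (hk : 1 ≤ k) (i j : Fin N) (hij : i ≠ j) :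
    (Nat.card {w : Fin (k + 1) → Fin N //
        w 0 = i ∧ w (Fin.last k) = j ∧ (∀ m : Fin k, E (w m.castSucc) (w m.succ)) ∧
        Function.Injective w} : ℤ)
      = ∑ S ∈ Finset.univ.powerset.filter (fun S : Finset (Fin N) => S.Nonempty),
          Ibinom ((N : ℤ) - S.card) ((k : ℤ) + 1 - S.card) *
            (-1) ^ ((k : ℤ) + 1 - S.card).toNat * (restrict A S ^ k) i j := by
  set f : ℕ → ℤ := fun s =>
    Ibinom ((N : ℤ) - s) ((k : ℤ) + 1 - s) * (-1) ^ (((k : ℤ) + 1 - s).toNat) with hf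
  -- rewrite RHS
  have step1 : ∑ S ∈ Finset.univ.powerset.filter (fun S : Finset (Fin N) => S.Nonempty),
          Ibinom ((N : ℤ) - S.card) ((k : ℤ) + 1 - S.card) *
            (-1) ^ ((k : ℤ) + 1 - S.card).toNat * (restrict A S ^ k) i j
      = ∑ w : Fin (k + 1) → Fin N,
          ∑ S ∈ Finset.univ.powerset.filter (fun S : Finset (Fin N) => S.Nonempty),
            (if w 0 = i ∧ w (Fin.last k) = j ∧ (∀ m : Fin k, E (w m.castSucc) (w m.succ)) ∧
               (∀ t, w t ∈ S) then f S.card else 0) := by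
    rw [Finset.sum_comm]
    refine Finset.sum_congr rfl fun S _ => ?_
    rw [restrict_pow_apply E A hA S k hk i j, Finset.mul_sum]
    refine Finset.sum_congr rfl fun w _ => ?_
    by_cases h : w 0 = i ∧ w (Fin.last k) = j ∧ (∀ m : Fin k, E (w m.castSucc) (w m.succ)) ∧
        (∀ t, w t ∈ S)
    · rw [if_pos h, if_pos h, mul_one, hf]
    · rw [if_neg h, if_neg h, mul_zero]
  rw [step1]
  -- per-walk inner sum
  have step2 : ∀ w : Fin (k + 1) → Fin N,
      (∑ S ∈ Finset.univ.powerset.filter (fun S : Finset (Fin N) => S.Nonempty),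
        (if w 0 = i ∧ w (Fin.last k) = j ∧ (∀ m : Fin k, E (w m.castSucc) (w m.succ)) ∧
           (∀ t, w t ∈ S) then f S.card else 0))
      = if w 0 = i ∧ w (Fin.last k) = j ∧ (∀ m : Fin k, E (w m.castSucc) (w m.succ)) ∧
          Function.Injective w then 1 else 0 := by
    intro w
    by_cases hc : w 0 = i ∧ w (Fin.last k) = j ∧ (∀ m : Fin k, E (w m.castSucc) (w m.succ))
    · set T : Finset (Fin N) := Finset.univ.image w with hT
      have hTne : T.Nonempty := ⟨w 0, by simp [hT]⟩
      have hmem : ∀ S : Finset (Fin N), (∀ t, w t ∈ S) ↔ T ⊆ S := by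
        intro S
        rw [hT, Finset.image_subset_iff]
        exact ⟨fun h x _ => h x, fun h t => h t (Finset.mem_univ t)⟩
      have e1 : (∑ S ∈ Finset.univ.powerset.filter (fun S : Finset (Fin N) => S.Nonempty),
          (if w 0 = i ∧ w (Fin.last k) = j ∧ (∀ m : Fin k, E (w m.castSucc) (w m.succ)) ∧
             (∀ t, w t ∈ S) then f S.card else 0))
          = ∑ S ∈ Finset.univ.powerset.filter (fun S : Finset (Fin N) => T ⊆ S), f S.card := by
        rw [Finset.sum_filter, Finset.sum_filter]
        refine Finset.sum_congr rfl fun S _ => ?_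
        by_cases hTS : T ⊆ S
        · rw [if_pos hTS, if_pos (hTne.mono hTS),
            if_pos ⟨hc.1, hc.2.1, hc.2.2, (hmem S).2 hTS⟩]
        · rw [if_neg hTS]
          by_cases hSne : S.Nonempty
          · rw [if_pos hSne, if_neg]
            intro h
            exact hTS ((hmem S).1 h.2.2.2)
          · rw [if_neg hSne]
      rw [e1, superset_sum T f]
      have ht2 : T.card ≤ k + 1 := by
        calc T.card ≤ (Finset.univ : Finset (Fin (k + 1))).card := Finset.card_image_le
        _ = k + 1 := by simp
      have htN : T.card ≤ N := by
        calc T.card ≤ Fintype.card (Fin N) := Finset.card_le_univ T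
        _ = N := by simp
      have := arith N k T.card ht2 htN
      rw [hf]
      simp only []
      rw [this]
      -- card = k+1 ↔ injective
      have hinj : T.card = k + 1 ↔ Function.Injective w := by
        rw [hT]
        constructor
        · intro h
          have : (Finset.univ.image w).card = (Finset.univ : Finset (Fin (k + 1))).card := by
            simp [h]
          have := Finset.card_image_iff.1 this
          intro a b hab
          exact this (Finset.mem_coe.2 (Finset.mem_univ a)) (Finset.mem_coe.2 (Finset.mem_univ b)) hab
        · intro h
          rw [Finset.card_image_of_injective _ h]
          simp
      by_cases hI : Function.Injective w
      · rw [if_pos (hinj.2 hI), if_pos ⟨hc.1, hc.2.1, hc.2.2, hI⟩]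
      · rw [if_neg (fun h => hI (hinj.1 h)), if_neg (by tauto)]
    · rw [if_neg (by tauto), Finset.sum_eq_zero]
      intro S _
      rw [if_neg (by tauto)]
  simp_rw [step2]
  -- LHS count
  rw [Nat.card_eq_fintype_card, Fintype.card_subtype]
  rw [Finset.sum_boole]
end

section
/- Let G be a directed graph on vertices {1,...,N} with adjacency matrix A. For every vertex i and every k ≥ 1, the number of simple cycles of length k starting and ending at i equals ∑_{S ⊆ V, S ≠ ∅} C(N−|S|, k−|S|)·(−1)^{k−|S|}·((A_S)^k)_{ii}, with C(n,m) = 0 when m < 0 or m > n. -/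
open scoped Classical

open Finset

lemma prod_ite_one' {α : Type*} [Fintype α] (p : α → Prop) [DecidablePred p]
    [Decidable (∀ a, p a)] :
    (∏ a : α, (if p a then (1:ℤ) else 0)) = if ∀ a, p a then 1 else 0 := by
  by_cases h : ∀ a, p a
  · simp [h]
  · rw [if_neg h]
    push_neg at h
    obtain ⟨a, ha⟩ := h
    exact Finset.prod_eq_zero (mem_univ a) (by simp [ha])

lemma pow_entry {N : ℕ} (M : Matrix (Fin N) (Fin N) ℤ) :
    ∀ (k : ℕ) (a b : Fin N),
    (M ^ k) a b = ∑ w ∈ (Finset.univ : Finset (Fin (k+1) → Fin N)).filter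
        (fun w => w 0 = a ∧ w (Fin.last k) = b),
      ∏ m : Fin k, M (w m.castSucc) (w m.succ) := by
  intro k
  induction k with
  | zero =>
    intro a b
    by_cases h : a = b
    · subst h
      rw [pow_zero]
      have : (Finset.univ : Finset (Fin 1 → Fin N)).filter
          (fun w => w 0 = a ∧ w (Fin.last 0) = a) = {fun _ => a} := by
        ext w
        simp only [mem_filter, mem_univ, true_and, mem_singleton]
        constructor
        · rintro ⟨h1, _⟩; funext j; fin_cases j; exact h1
        · rintro rfl; exact ⟨rfl, rfl⟩
      rw [this]
      simp [Matrix.one_apply]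
    · rw [pow_zero]
      have : (Finset.univ : Finset (Fin 1 → Fin N)).filter
          (fun w => w 0 = a ∧ w (Fin.last 0) = b) = ∅ := by
        ext w
        simp only [mem_filter, mem_univ, true_and, Finset.notMem_empty, iff_false]
        rintro ⟨h1, h2⟩
        exact h (h1 ▸ h2 ▸ rfl)
      rw [this]
      simp [Matrix.one_apply, h]
  | succ k ih =>
    intro a b
    rw [pow_succ', Matrix.mul_apply]
    simp_rw [ih]
    simp_rw [Finset.mul_sum]
    rw [Finset.sum_sigma']
    refine Finset.sum_bij' (fun p _ => Fin.cons a p.2)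
      (fun w _ => ⟨w 1, fun j => w j.succ⟩) ?_ ?_ ?_ ?_ ?_
    · rintro ⟨c, w'⟩ hp
      simp only [Finset.mem_sigma, mem_filter, mem_univ, true_and] at hp ⊢
      refine ⟨by simp, ?_⟩
      have h2 : Fin.last (k+1) = (Fin.last k).succ := rfl
      rw [h2, Fin.cons_succ]
      exact hp.2
    · intro w hw
      simp only [mem_filter, mem_univ, true_and] at hw
      simp only [Finset.mem_sigma, mem_filter, mem_univ, true_and]
      exact ⟨rfl, by rw [← hw.2]; rfl⟩
    · rintro ⟨c, w'⟩ hp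
      simp only [Finset.mem_sigma, mem_filter, mem_univ, true_and] at hp
      dsimp only
      have h1 : (Fin.cons a w' : Fin (k+2) → Fin N) 1 = c := by
        have h2 : (1 : Fin (k+2)) = (0 : Fin (k+1)).succ := rfl
        rw [h2, Fin.cons_succ]; exact hp.1
      refine Sigma.ext h1 (heq_of_eq ?_)
      funext j
      simp
    · intro w hw
      simp only [mem_filter, mem_univ, true_and] at hw
      dsimp only
      funext j
      rcases Fin.eq_zero_or_eq_succ j with rfl | ⟨j', rfl⟩
      · rw [Fin.cons_zero, hw.1]
      · rw [Fin.cons_succ]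
    · rintro ⟨c, w'⟩ hp
      simp only [Finset.mem_sigma, mem_filter, mem_univ, true_and] at hp
      dsimp only
      rw [Fin.prod_univ_succ]
      have h0 : (Fin.cons a w' : Fin (k+2) → Fin N) ((0:Fin (k+1)).castSucc) = a := by simp
      have h1 : (Fin.cons a w' : Fin (k+2) → Fin N) ((0:Fin (k+1)).succ) = c := by
        rw [Fin.cons_succ]; exact hp.1
      rw [h0, h1]
      congr 1

lemma alt_sum (m : ℕ) :
    ∑ j ∈ Finset.range (m+1), ((-1:ℤ))^(m-j) * m.choose j = if m = 0 then 1 else 0 := by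
  have hr := Finset.sum_range_reflect (fun j => ((-1:ℤ))^(m-j) * m.choose j) (m+1)
  rw [← hr]
  have : ∀ j ∈ Finset.range (m+1),
      ((-1:ℤ))^(m-(m+1-1-j)) * m.choose (m+1-1-j) = (-1)^j * m.choose j := by
    intro j hj
    rw [Finset.mem_range, Nat.lt_succ_iff] at hj
    have h1 : m + 1 - 1 - j = m - j := by omega
    have h2 : m - (m - j) = j := by omega
    rw [h1, h2, Nat.choose_symm hj]
  rw [Finset.sum_congr rfl this]
  exact Int.alternating_sum_range_choose

lemma key_num (n t k : ℕ) :
    ∑ j ∈ Finset.range (n+1), (n.choose j : ℤ) *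
      (Ibinom ((n:ℤ) - j) ((k:ℤ) - t - j) * (-1) ^ (((k:ℤ) - t - j)).toNat)
    = if t = k then 1 else 0 := by
  rcases lt_or_ge k t with h | h
  · rw [if_neg (by omega)]
    refine Finset.sum_eq_zero fun j _ => ?_
    have : ¬ (0 ≤ (k:ℤ) - t - j ∧ (k:ℤ) - t - j ≤ (n:ℤ) - j) := by
      push_neg; intro h2; exfalso; omega
    rw [Ibinom, if_neg this]; ring
  · have hm : (k:ℤ) - t = ((k - t : ℕ) : ℤ) := by omega
    set m := k - t with hmdef
    by_cases hmn : m ≤ n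
    · have hsub : Finset.range (m+1) ⊆ Finset.range (n+1) := by
        intro x hx; simp only [Finset.mem_range] at *; omega
      rw [← Finset.sum_subset hsub]
      · have hcongr : ∀ j ∈ Finset.range (m+1),
            (n.choose j : ℤ) * (Ibinom ((n:ℤ) - j) ((k:ℤ) - t - j) *
              (-1) ^ (((k:ℤ) - t - j)).toNat)
            = (n.choose m : ℤ) * ((m.choose j : ℤ) * (-1)^(m-j)) := by
          intro j hj
          rw [Finset.mem_range, Nat.lt_succ_iff] at hj
          have e1 : (k:ℤ) - t - j = ((m - j : ℕ) : ℤ) := by omega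
          have e2 : (n:ℤ) - j = ((n - j : ℕ) : ℤ) := by omega
          rw [e1, e2, Ibinom, if_pos ⟨Int.ofNat_nonneg _, by exact_mod_cast by omega⟩]
          rw [Int.toNat_natCast, Int.toNat_natCast]
          have hcm : (n.choose j : ℤ) * ((n-j).choose (m-j) : ℤ)
              = (n.choose m : ℤ) * (m.choose j : ℤ) := by
            have := Nat.choose_mul (n := n) hj
            exact_mod_cast congrArg (Nat.cast : ℕ → ℤ) this.symm
          rw [← mul_assoc, hcm]
          ring
        rw [Finset.sum_congr rfl hcongr, ← Finset.mul_sum]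
        have : ∑ j ∈ Finset.range (m+1), (m.choose j : ℤ) * (-1)^(m-j)
            = if m = 0 then 1 else 0 := by
          rw [← alt_sum m]; exact Finset.sum_congr rfl fun j _ => by ring
        rw [this]
        by_cases hm0 : m = 0
        · rw [if_pos hm0, if_pos (by omega), hm0, Nat.choose_zero_right]; norm_num
        · rw [if_neg hm0, if_neg (by omega), mul_zero]
      · intro j hj hj2
        simp only [Finset.mem_range] at hj hj2
        have : ¬ (0 ≤ (k:ℤ) - t - j ∧ (k:ℤ) - t - j ≤ (n:ℤ) - j) := by
          push_neg; intro h2; exfalso; omega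
        rw [Ibinom, if_neg this]; ring
    · rw [if_neg (by omega)]
      refine Finset.sum_eq_zero fun j _ => ?_
      have : ¬ (0 ≤ (k:ℤ) - t - j ∧ (k:ℤ) - t - j ≤ (n:ℤ) - j) := by
        push_neg; intro h2; omega
      rw [Ibinom, if_neg this]; ring

lemma key {N k : ℕ} (T : Finset (Fin N)) (hT : T.Nonempty) :
    ∑ S ∈ (Finset.univ.powerset.filter (fun S : Finset (Fin N) => S.Nonempty)).filter
        (fun S => T ⊆ S),
      Ibinom ((N:ℤ) - S.card) ((k:ℤ) - S.card) * (-1) ^ ((k:ℤ) - S.card).toNat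
    = if T.card = k then 1 else 0 := by
  have hfil : (Finset.univ.powerset.filter (fun S : Finset (Fin N) => S.Nonempty)).filter
      (fun S => T ⊆ S) = Finset.univ.filter (fun S => T ⊆ S) := by
    ext S
    simp only [Finset.mem_filter]
    constructor
    · rintro ⟨_, h⟩; exact ⟨Finset.mem_univ S, h⟩
    · rintro ⟨_, h⟩
      exact ⟨⟨Finset.mem_powerset.mpr (Finset.subset_univ S), hT.mono h⟩, h⟩
  rw [hfil]
  have hbij : ∑ S ∈ Finset.univ.filter (fun S : Finset (Fin N) => T ⊆ S),
      Ibinom ((N:ℤ) - S.card) ((k:ℤ) - S.card) * (-1) ^ ((k:ℤ) - S.card).toNat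
      = ∑ U ∈ Tᶜ.powerset,
      Ibinom ((N:ℤ) - (T.card + U.card)) ((k:ℤ) - (T.card + U.card)) *
        (-1) ^ ((k:ℤ) - (T.card + U.card)).toNat := by
    refine Finset.sum_bij' (fun S _ => S \ T) (fun U _ => U ∪ T) ?_ ?_ ?_ ?_ ?_
    · intro S hS
      simp only [Finset.mem_filter, Finset.mem_univ, true_and] at hS
      simp only [Finset.mem_powerset]
      intro x hx
      simp only [Finset.mem_sdiff] at hx
      simp [hx.2]
    · intro U hU
      simp only [Finset.mem_filter, Finset.mem_univ, true_and]
      exact Finset.subset_union_right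
    · intro S hS
      simp only [Finset.mem_filter, Finset.mem_univ, true_and] at hS
      exact Finset.sdiff_union_of_subset hS
    · intro U hU
      simp only [Finset.mem_powerset] at hU
      have hdisj : Disjoint U T := by
        rw [Finset.disjoint_left]
        intro x hxU hxT
        have := hU hxU
        simp only [Finset.mem_compl] at this
        exact this hxT
      show (U ∪ T) \ T = U
      rw [Finset.union_sdiff_distrib, Finset.sdiff_self, Finset.union_empty,
        Finset.sdiff_eq_self_of_disjoint hdisj]
    · intro S hS
      simp only [Finset.mem_filter, Finset.mem_univ, true_and] at hS
      have hcard : S.card = T.card + (S \ T).card := by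
        rw [Nat.add_comm, Finset.card_sdiff_add_card_eq_card hS]
      rw [hcard]
      push_cast
      ring_nf
  rw [hbij]
  have hpc : ∑ U ∈ Tᶜ.powerset,
      Ibinom ((N:ℤ) - (T.card + U.card)) ((k:ℤ) - (T.card + U.card)) *
        (-1) ^ ((k:ℤ) - (T.card + U.card)).toNat
      = ∑ j ∈ Finset.range (Tᶜ.card + 1), Tᶜ.card.choose j •
        (Ibinom ((N:ℤ) - (T.card + j)) ((k:ℤ) - (T.card + j)) *
          (-1) ^ ((k:ℤ) - (T.card + j)).toNat) :=
    Finset.sum_powerset_apply_card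
      (fun j => Ibinom ((N:ℤ) - (T.card + j)) ((k:ℤ) - (T.card + j)) *
        (-1) ^ ((k:ℤ) - (T.card + j)).toNat)
  rw [hpc]
  have hTN : T.card ≤ N := by
    have := Finset.card_le_univ T
    simpa using this
  have hcc : Tᶜ.card = N - T.card := by
    rw [Finset.card_compl]
    simp
  rw [hcc]
  have := key_num (N - T.card) T.card k
  rw [← this]
  refine Finset.sum_congr rfl fun j hj => ?_
  rw [Finset.mem_range] at hj
  have e1 : (N:ℤ) - (T.card + j) = ((N - T.card : ℕ) : ℤ) - j := by omega
  have e2 : (k:ℤ) - (T.card + j) = (k:ℤ) - T.card - j := by ring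
  rw [e1, e2, nsmul_eq_mul]

theorem stmt6 (N : ℕ) (E : Fin N → Fin N → Prop)
    (A : Matrix (Fin N) (Fin N) ℤ) (hA : ∀ i j, A i j = if E i j then 1 else 0)
    (k : ℕ) (hk : 1 ≤ k) (i : Fin N) :
    (Nat.card {w : Fin (k + 1) → Fin N //
        w 0 = i ∧ w (Fin.last k) = i ∧ (∀ m : Fin k, E (w m.castSucc) (w m.succ)) ∧
        ∀ a b : Fin k, w a.castSucc = w b.castSucc → a = b} : ℤ)
      = ∑ S ∈ Finset.univ.powerset.filter (fun S : Finset (Fin N) => S.Nonempty),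
          Ibinom ((N : ℤ) - S.card) ((k : ℤ) - S.card) *
            (-1) ^ ((k : ℤ) - S.card).toNat * (restrict A S ^ k) i i := by
  -- support of a walk
  set f : (Fin (k+1) → Fin N) → Finset (Fin N) :=
    fun w => Finset.image (fun m : Fin k => w m.castSucc) Finset.univ with hf
  set walks0 : Finset (Fin (k+1) → Fin N) :=
    (Finset.univ : Finset (Fin (k+1) → Fin N)).filter
      (fun w => w 0 = i ∧ w (Fin.last k) = i) with hwalks0
  -- Step A
  have stepA : ∀ S : Finset (Fin N), (restrict A S ^ k) i i
      = ∑ w ∈ walks0,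
        if (∀ m : Fin k, E (w m.castSucc) (w m.succ)) ∧ (∀ m : Fin k, w m.castSucc ∈ S)
        then (1:ℤ) else 0 := by
    intro S
    rw [pow_entry]
    refine Finset.sum_congr rfl fun w hw => ?_
    simp only [hwalks0, Finset.mem_filter, Finset.mem_univ, true_and] at hw
    have hres : ∀ x y, restrict A S x y = if (x ∈ S ∧ y ∈ S) ∧ E x y then (1:ℤ) else 0 := by
      intro x y
      show (if x ∈ S ∧ y ∈ S then A x y else 0) = _
      rw [hA]; split_ifs <;> tauto
    simp_rw [hres]
    rw [prod_ite_one']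
    refine if_congr ?_ rfl rfl
    constructor
    · intro h; exact ⟨fun m => (h m).2, fun m => (h m).1.1⟩
    · rintro ⟨he, hs⟩ m
      refine ⟨⟨hs m, ?_⟩, he m⟩
      rcases Fin.eq_castSucc_or_eq_last m.succ with ⟨m', hm'⟩ | hl
      · rw [hm']; exact hs m'
      · rw [hl, hw.2, ← hw.1]
        exact hs ⟨0, hk⟩
  -- Step B : rewrite RHS
  have hne : ∀ w : Fin (k+1) → Fin N, (f w).Nonempty :=
    fun w => ⟨w ((⟨0, hk⟩ : Fin k)).castSucc,
      Finset.mem_image_of_mem _ (Finset.mem_univ _)⟩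
  have hRHS : ∑ S ∈ Finset.univ.powerset.filter (fun S : Finset (Fin N) => S.Nonempty),
          Ibinom ((N : ℤ) - S.card) ((k : ℤ) - S.card) *
            (-1) ^ ((k : ℤ) - S.card).toNat * (restrict A S ^ k) i i
      = ∑ w ∈ walks0,
          if (∀ m : Fin k, E (w m.castSucc) (w m.succ)) ∧ (f w).card = k
          then (1:ℤ) else 0 := by
    calc ∑ S ∈ Finset.univ.powerset.filter (fun S : Finset (Fin N) => S.Nonempty),
          Ibinom ((N : ℤ) - S.card) ((k : ℤ) - S.card) *
            (-1) ^ ((k : ℤ) - S.card).toNat * (restrict A S ^ k) i i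
        = ∑ S ∈ Finset.univ.powerset.filter (fun S : Finset (Fin N) => S.Nonempty),
            ∑ w ∈ walks0,
            Ibinom ((N : ℤ) - S.card) ((k : ℤ) - S.card) * (-1) ^ ((k : ℤ) - S.card).toNat *
              (if (∀ m : Fin k, E (w m.castSucc) (w m.succ)) ∧
                  (∀ m : Fin k, w m.castSucc ∈ S) then (1:ℤ) else 0) := by
          refine Finset.sum_congr rfl fun S _ => ?_
          rw [stepA S, Finset.mul_sum]
      _ = ∑ w ∈ walks0,
            ∑ S ∈ Finset.univ.powerset.filter (fun S : Finset (Fin N) => S.Nonempty),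
            Ibinom ((N : ℤ) - S.card) ((k : ℤ) - S.card) * (-1) ^ ((k : ℤ) - S.card).toNat *
              (if (∀ m : Fin k, E (w m.castSucc) (w m.succ)) ∧
                  (∀ m : Fin k, w m.castSucc ∈ S) then (1:ℤ) else 0) :=
          Finset.sum_comm
      _ = ∑ w ∈ walks0,
          (if (∀ m : Fin k, E (w m.castSucc) (w m.succ)) ∧ (f w).card = k
           then (1:ℤ) else 0) := by
          refine Finset.sum_congr rfl fun w hw => ?_
          by_cases he : ∀ m : Fin k, E (w m.castSucc) (w m.succ)
          · have h1 : ∀ S : Finset (Fin N),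
                Ibinom ((N : ℤ) - S.card) ((k : ℤ) - S.card) * (-1) ^ ((k : ℤ) - S.card).toNat *
                  (if (∀ m : Fin k, E (w m.castSucc) (w m.succ)) ∧
                      (∀ m : Fin k, w m.castSucc ∈ S) then (1:ℤ) else 0)
                = if f w ⊆ S then
                    Ibinom ((N : ℤ) - S.card) ((k : ℤ) - S.card) *
                      (-1) ^ ((k : ℤ) - S.card).toNat
                  else 0 := by
              intro S
              have hiff : ((∀ m : Fin k, E (w m.castSucc) (w m.succ)) ∧
                  (∀ m : Fin k, w m.castSucc ∈ S)) ↔ f w ⊆ S := by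
                rw [hf]
                simp only [Finset.image_subset_iff, Finset.mem_univ, true_implies]
                constructor
                · rintro ⟨_, hs⟩; exact hs
                · intro hs; exact ⟨he, hs⟩
              rw [if_congr hiff rfl rfl]
              split_ifs <;> ring
            simp_rw [h1]
            rw [← Finset.sum_filter, key (f w) (hne w)]
            by_cases hc : (f w).card = k <;> simp [hc, he]
          · have h1 : ∀ S : Finset (Fin N),
                Ibinom ((N : ℤ) - S.card) ((k : ℤ) - S.card) * (-1) ^ ((k : ℤ) - S.card).toNat *
                  (if (∀ m : Fin k, E (w m.castSucc) (w m.succ)) ∧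
                      (∀ m : Fin k, w m.castSucc ∈ S) then (1:ℤ) else 0) = 0 := by
              intro S
              rw [if_neg (fun hc => he hc.1)]
              ring
            simp_rw [h1]
            rw [Finset.sum_const_zero, if_neg (fun hc => he hc.1)]
  rw [hRHS]
  -- Step C : LHS
  have hinj : ∀ w : Fin (k+1) → Fin N,
      ((f w).card = k ↔ ∀ a b : Fin k, w a.castSucc = w b.castSucc → a = b) := by
    intro w
    have hcu : (Finset.univ : Finset (Fin k)).card = k := by simp
    constructor
    · intro h a b hab
      have h2 : ((Finset.univ : Finset (Fin k)).image
          (fun m : Fin k => w m.castSucc)).card = (Finset.univ : Finset (Fin k)).card := by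
        show (f w).card = (Finset.univ : Finset (Fin k)).card
        rw [h, hcu]
      have := Finset.card_image_iff.mp h2
      exact this (by simp) (by simp) hab
    · intro h
      show ((Finset.univ : Finset (Fin k)).image (fun m : Fin k => w m.castSucc)).card = k
      rw [Finset.card_image_of_injective _ (fun a b hab => h a b hab), hcu]
  rw [Nat.card_eq_fintype_card, Fintype.card_subtype]
  rw [Finset.sum_boole]
  norm_cast
  rw [hwalks0, Finset.filter_filter]
  congr 1
  refine Finset.filter_congr fun w _ => ?_
  constructor
  · rintro ⟨h1, h2, h3, h4⟩
    exact ⟨⟨h1, h2⟩, h3, (hinj w).mpr h4⟩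
  · rintro ⟨⟨h1, h2⟩, h3, h4⟩
    exact ⟨h1, h2, h3, (hinj w).mp h4⟩
end

section
/- Let G be a directed graph on vertices {1,...,N} with adjacency matrix A. For every vertex i and k ≥ 1, the number of simple cycles of length k through i (as closed walks starting at i) equals ∑_{C} C(|N(C)|, k−|C|)·(−1)^{k−|C|}·((A_C)^k)_{ii}, the sum being over non-empty weakly connected subsets C of V. -/
open scoped Classical

/-- The subgraph induced by `C` is weakly connected. -/
def WConn {N : ℕ} (E : Fin N → Fin N → Prop) (C : Finset (Fin N)) : Prop :=
  ∀ i ∈ C, ∀ j ∈ C,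
    Relation.ReflTransGen (fun a b => a ∈ C ∧ b ∈ C ∧ (E a b ∨ E b a)) i j

/-- The weak neighborhood of `C`: vertices outside `C` with an edge to or from `C`. -/
noncomputable def wNbhd {N : ℕ} (E : Fin N → Fin N → Prop) (C : Finset (Fin N)) :
    Finset (Fin N) :=
  Finset.univ.filter (fun i => i ∉ C ∧ ∃ j ∈ C, E i j ∨ E j i)

/-! ### Auxiliary lemmas -/

lemma Ibinom_natCast (a b : ℕ) : Ibinom a b = (a.choose b : ℤ) := by
  unfold Ibinom
  by_cases h : (b : ℤ) ≤ (a : ℤ)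
  · simp [h, Int.toNat_natCast]
  · rw [if_neg (by omega)]
    have : a < b := by exact_mod_cast not_le.mp h
    rw [Nat.choose_eq_zero_of_lt this]; simp

lemma Ibinom_neg {a b : ℤ} (h : b < 0) : Ibinom a b = 0 := by
  unfold Ibinom; rw [if_neg]; omega

/-- Key binomial identity, natural-number version. -/
lemma key_nat (m : ℕ) : ∀ (n r : ℕ),
    ∑ j ∈ Finset.range (m+1), (m.choose j : ℤ) *
      (if j ≤ r then (-1)^(r-j) * ((n + (m-j)).choose (r-j) : ℤ) else 0)
    = (-1)^r * (n.choose r : ℤ) := by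
  induction m with
  | zero => intro n r; simp
  | succ m IH =>
    intro n r
    set G : ℕ → ℤ := fun j =>
      if j ≤ r then (-1)^(r-j) * ((n + (m+1-j)).choose (r-j) : ℤ) else 0 with hG
    have hmain : ∑ j ∈ Finset.range (m+1+1), ((m+1).choose j : ℤ) * G j
        = (∑ j ∈ Finset.range (m+1), (m.choose j : ℤ) * G j)
          + ∑ j ∈ Finset.range (m+1), (m.choose j : ℤ) * G (j+1) := by
      rw [Finset.sum_range_succ' (fun j => ((m+1).choose j : ℤ) * G j) (m+1)]
      have h1 : ∀ j ∈ Finset.range (m+1),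
          ((m+1).choose (j+1) : ℤ) * G (j+1)
          = (m.choose (j+1) : ℤ) * G (j+1) + (m.choose j : ℤ) * G (j+1) := by
        intro j _
        rw [Nat.choose_succ_succ m j]
        push_cast; ring
      rw [Finset.sum_congr rfl h1, Finset.sum_add_distrib]
      have h2 : ∑ j ∈ Finset.range (m+1), ((m).choose (j+1) : ℤ) * G (j+1)
            + ((m+1).choose 0 : ℤ) * G 0
          = ∑ j ∈ Finset.range (m+1), (m.choose j : ℤ) * G j := by
        rw [show ((m+1).choose 0 : ℤ) = ((m).choose 0 : ℤ) by simp]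
        rw [← Finset.sum_range_succ' (fun j => ((m).choose j : ℤ) * G j) (m+1)]
        rw [Finset.sum_range_succ]
        simp [Nat.choose_succ_self]
      linarith [h2]
    rw [hmain]
    have hA : ∑ j ∈ Finset.range (m+1), (m.choose j : ℤ) * G j
        = (-1)^r * ((n+1).choose r : ℤ) := by
      rw [← IH (n+1) r]
      apply Finset.sum_congr rfl
      intro j hj
      rw [Finset.mem_range] at hj
      have : n + (m+1-j) = (n+1) + (m-j) := by omega
      rw [hG]; simp only []
      rw [this]
    rw [hA]
    cases r with
    | zero =>
      have hB : ∀ j ∈ Finset.range (m+1), (m.choose j : ℤ) * G (j+1) = 0 := by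
        intro j _; rw [hG]; simp
      rw [Finset.sum_congr rfl hB]
      simp
    | succ r' =>
      have hB : ∑ j ∈ Finset.range (m+1), (m.choose j : ℤ) * G (j+1)
          = (-1)^r' * (n.choose r' : ℤ) := by
        rw [← IH n r']
        apply Finset.sum_congr rfl
        intro j hj
        rw [Finset.mem_range] at hj
        rw [hG]; simp only []
        congr 1
        by_cases hjr : j + 1 ≤ r' + 1
        · rw [if_pos hjr, if_pos (by omega : j ≤ r')]
          rw [show r' + 1 - (j+1) = r' - j by omega]
          rw [show m + 1 - (j + 1) = m - j by omega]
        · rw [if_neg hjr, if_neg (by omega)]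
      rw [hB]
      have hp : ((n+1).choose (r'+1) : ℤ) = (n.choose r' : ℤ) + (n.choose (r'+1) : ℤ) := by
        exact_mod_cast congrArg (Nat.cast : ℕ → ℤ) (Nat.choose_succ_succ n r')
      rw [hp]; ring

/-- Key binomial identity, integer version. -/
lemma key_int (m n : ℕ) (r : ℤ) :
    ∑ j ∈ Finset.range (m+1), (m.choose j : ℤ) *
      ((-1)^((r - j).toNat) * Ibinom ((n : ℤ) + ((m : ℤ) - j)) (r - j))
    = (-1)^(r.toNat) * Ibinom n r := by
  rcases lt_or_ge r 0 with hr | hr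
  · have : ∀ j ∈ Finset.range (m+1), (m.choose j : ℤ) *
        ((-1)^((r - j).toNat) * Ibinom ((n : ℤ) + ((m : ℤ) - j)) (r - j)) = 0 := by
      intro j _
      rw [Ibinom_neg (by omega : r - (j:ℤ) < 0)]; ring
    rw [Finset.sum_congr rfl this, Ibinom_neg hr]
    simp
  · obtain ⟨rn, rfl⟩ := Int.eq_ofNat_of_zero_le hr
    rw [show ((rn : ℤ)).toNat = rn from Int.toNat_natCast rn, Ibinom_natCast n rn,
      ← key_nat m n rn]
    apply Finset.sum_congr rfl
    intro j hj
    rw [Finset.mem_range] at hj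
    congr 1
    by_cases hjr : j ≤ rn
    · rw [if_pos hjr]
      have h1 : ((rn : ℤ) - j).toNat = rn - j := by omega
      have h2 : (n : ℤ) + ((m : ℤ) - j) = ((n + (m - j) : ℕ) : ℤ) := by push_cast; omega
      have h3 : (rn : ℤ) - j = ((rn - j : ℕ) : ℤ) := by omega
      rw [h1, h2, h3, Ibinom_natCast]
    · rw [if_neg hjr, Ibinom_neg (by omega : (rn:ℤ) - j < 0)]
      ring

/-- Powerset sum of a card function, ℤ version. -/
lemma sum_powerset_card {α : Type*} (M : Finset α) (f : ℕ → ℤ) :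
    ∑ R ∈ M.powerset, f R.card
    = ∑ j ∈ Finset.range (M.card+1), (M.card.choose j : ℤ) * f j := by
  rw [Finset.sum_powerset_apply_card]
  apply Finset.sum_congr rfl
  intro j _
  rw [nsmul_eq_mul]

/-! ### Walk counting -/

noncomputable def walksTo {N : ℕ} (R : Fin N → Fin N → Prop) (k : ℕ) (i j : Fin N) :
    Finset (Fin (k+1) → Fin N) :=
  Finset.univ.filter (fun w => w 0 = i ∧ w (Fin.last k) = j ∧
    ∀ m : Fin k, R (w m.castSucc) (w m.succ))

lemma mem_walksTo {N : ℕ} {R : Fin N → Fin N → Prop} {k : ℕ} {i j : Fin N}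
    {w : Fin (k+1) → Fin N} :
    w ∈ walksTo R k i j ↔ (w 0 = i ∧ w (Fin.last k) = j ∧
      ∀ m : Fin k, R (w m.castSucc) (w m.succ)) := by
  unfold walksTo; simp

lemma count_walks {N : ℕ} (R : Fin N → Fin N → Prop) (M : Matrix (Fin N) (Fin N) ℤ)
    (hM : ∀ a b, M a b = if R a b then 1 else 0) :
    ∀ (k : ℕ) (i j : Fin N), (M ^ k) i j = ((walksTo R k i j).card : ℤ) := by
  intro k
  induction k with
  | zero =>
    intro i j
    have h1 : (M ^ 0) i j = if i = j then 1 else 0 := by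
      rw [pow_zero, Matrix.one_apply]
    rw [h1]
    by_cases hij : i = j
    · subst hij
      have : walksTo R 0 i i = {fun _ => i} := by
        ext w
        rw [mem_walksTo, Finset.mem_singleton]
        constructor
        · rintro ⟨h0, _, _⟩
          funext m
          have : m = 0 := Fin.ext (by omega)
          rw [this, h0]
        · rintro rfl
          exact ⟨rfl, rfl, fun m => m.elim0⟩
      rw [this]; simp
    · have : walksTo R 0 i j = ∅ := by
        ext w
        rw [mem_walksTo]
        simp only [Finset.notMem_empty, iff_false]
        rintro ⟨h0, hl, _⟩
        exact hij (by rw [← h0, ← hl]; rfl)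
      rw [this]; simp [hij]
  | succ k IH =>
    intro i j
    have hcard : (walksTo R (k+1) i j).card
        = ∑ a : Fin N, (walksTo R k i a).card * (if R a j then 1 else 0) := by
      rw [Finset.card_eq_sum_card_fiberwise
        (f := fun w => w ((Fin.last k).castSucc)) (t := Finset.univ)
        (fun w _ => Finset.mem_univ _)]
      apply Finset.sum_congr rfl
      intro a _
      by_cases hRa : R a j
      · rw [if_pos hRa, mul_one]
        apply Finset.card_nbij' (fun w => Fin.init w) (fun v => Fin.snoc v j)
        · -- forward membership
          intro w hw
          rw [Finset.mem_coe] at hw ⊢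
          rw [Finset.mem_filter] at hw
          obtain ⟨hw, hfib⟩ := hw
          rw [mem_walksTo] at hw ⊢
          obtain ⟨h0, hl, he⟩ := hw
          refine ⟨?_, ?_, ?_⟩
          · show w (Fin.castSucc 0) = i
            rw [Fin.castSucc_zero, h0]
          · exact hfib
          · intro m
            have := he m.castSucc
            rw [Fin.succ_castSucc] at this
            exact this
        · -- backward membership
          intro v hv
          simp only [Finset.mem_coe] at hv ⊢
          rw [mem_walksTo] at hv
          obtain ⟨h0, hl, he⟩ := hv
          rw [Finset.mem_filter]
          constructor
          · rw [mem_walksTo]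
            refine ⟨?_, ?_, ?_⟩
            · have h00 : (0 : Fin (k+1+1)) = Fin.castSucc (0 : Fin (k+1)) := rfl
              rw [h00, Fin.snoc_castSucc]
              exact h0
            · rw [Fin.snoc_last]
            · intro m
              refine Fin.lastCases ?_ ?_ m
              · rw [Fin.succ_last, Fin.snoc_last, Fin.snoc_castSucc, hl]
                exact hRa
              · intro m'
                rw [Fin.succ_castSucc, Fin.snoc_castSucc, Fin.snoc_castSucc]
                exact he m'
          · rw [Fin.snoc_castSucc, hl]
        · -- left inverse
          intro w hw
          rw [Finset.mem_coe, Finset.mem_filter, mem_walksTo] at hw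
          rw [← hw.1.2.1]
          exact Fin.snoc_init_self w
        · -- right inverse
          intro v _
          simp
      · rw [if_neg hRa, mul_zero, Finset.card_eq_zero]
        ext w
        simp only [Finset.notMem_empty, iff_false, Finset.mem_filter]
        rintro ⟨hw, hfib⟩
        rw [mem_walksTo] at hw
        obtain ⟨h0, hl, he⟩ := hw
        have := he (Fin.last k)
        rw [Fin.succ_last, hl, hfib] at this
        exact hRa this
    have hM' : (M ^ (k+1)) i j = ∑ a : Fin N, (M ^ k) i a * M a j := by
      rw [pow_succ, Matrix.mul_apply]
    rw [hM', hcard]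
    push_cast
    apply Finset.sum_congr rfl
    intro a _
    rw [IH i a, hM a j]

/-! ### Connected components relative to a base point -/

noncomputable def compF {N : ℕ} (E : Fin N → Fin N → Prop) (s₀ : Fin N)
    (H : Finset (Fin N)) : Finset (Fin N) :=
  H.filter (fun x =>
    Relation.ReflTransGen (fun a b => a ∈ H ∧ b ∈ H ∧ (E a b ∨ E b a)) x s₀)

section comp

variable {N : ℕ} {E : Fin N → Fin N → Prop} {s₀ : Fin N} {H : Finset (Fin N)}

lemma mem_compF {x : Fin N} :
    x ∈ compF E s₀ H ↔ x ∈ H ∧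
      Relation.ReflTransGen (fun a b => a ∈ H ∧ b ∈ H ∧ (E a b ∨ E b a)) x s₀ := by
  unfold compF; simp

lemma compF_subset : compF E s₀ H ⊆ H := Finset.filter_subset _ _

lemma reach_in {x : Fin N}
    (h : Relation.ReflTransGen (fun a b => a ∈ H ∧ b ∈ H ∧ (E a b ∨ E b a)) x s₀) :
    Relation.ReflTransGen
      (fun a b => a ∈ compF E s₀ H ∧ b ∈ compF E s₀ H ∧ (E a b ∨ E b a)) x s₀ := by
  induction h using Relation.ReflTransGen.head_induction_on with
  | refl => exact Relation.ReflTransGen.refl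
  | head h' hrest IH =>
    rename_i a c
    have ha : a ∈ compF E s₀ H := mem_compF.mpr ⟨h'.1, hrest.head h'⟩
    have hc : c ∈ compF E s₀ H := mem_compF.mpr ⟨h'.2.1, hrest⟩
    exact IH.head ⟨ha, hc, h'.2.2⟩

lemma compF_wconn : WConn E (compF E s₀ H) := by
  intro x hx y hy
  rw [mem_compF] at hx hy
  have hxr := reach_in (E := E) hx.2
  have hyr := reach_in (E := E) hy.2
  have hsym : Symmetric (fun a b =>
      a ∈ compF E s₀ H ∧ b ∈ compF E s₀ H ∧ (E a b ∨ E b a)) := by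
    rintro a b ⟨ha, hb, he⟩
    exact ⟨hb, ha, he.symm⟩
  exact hxr.trans ((@Relation.ReflTransGen.stdSymm _ _ ⟨fun a b h => hsym h⟩).symm _ _ hyr)

lemma subset_compF {S : Finset (Fin N)} (hconn : WConn E S) (hs₀ : s₀ ∈ S)
    (hSH : S ⊆ H) : S ⊆ compF E s₀ H := by
  intro s hs
  rw [mem_compF]
  refine ⟨hSH hs, ?_⟩
  have := hconn s hs s₀ hs₀
  exact Relation.ReflTransGen.mono (fun a b hab => ⟨hSH hab.1, hSH hab.2.1, hab.2.2⟩) _ _ this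

lemma compF_no_edge {x y : Fin N} (hxH : x ∈ H) (hx : x ∉ compF E s₀ H)
    (hy : y ∈ compF E s₀ H) (he : E x y ∨ E y x) : False := by
  rw [mem_compF] at hy
  exact hx (mem_compF.mpr ⟨hxH, hy.2.head ⟨hxH, hy.1, he⟩⟩)

lemma compF_union {C R : Finset (Fin N)} (hC : WConn E C) (hs₀C : s₀ ∈ C)
    (hRC : ∀ x ∈ R, x ∉ C) (hRN : ∀ x ∈ R, x ∉ wNbhd E C) :
    compF E s₀ (C ∪ R) = C := by
  apply Finset.Subset.antisymm
  · intro x hx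
    rw [mem_compF] at hx
    obtain ⟨hxu, hxr⟩ := hx
    -- all points reaching s₀ inside C ∪ R lie in C
    have hsym : Symmetric (fun a b =>
        a ∈ C ∪ R ∧ b ∈ C ∪ R ∧ (E a b ∨ E b a)) := by
      rintro a b ⟨ha, hb, he⟩; exact ⟨hb, ha, he.symm⟩
    have hback := (@Relation.ReflTransGen.stdSymm _ _ ⟨fun a b h => hsym h⟩).symm _ _ hxr
    clear hxr
    induction hback with
    | refl => exact hs₀C
    | tail hrest hstep IH =>
      rename_i b c
      obtain ⟨hbu, hcu, he⟩ := hstep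
      have hbC : b ∈ C := IH hbu
      rcases Finset.mem_union.mp hcu with hcC | hcR
      · exact hcC
      · exfalso
        apply hRN c hcR
        unfold wNbhd
        rw [Finset.mem_filter]
        exact ⟨Finset.mem_univ _, hRC c hcR, ⟨b, hbC, he.symm⟩⟩
  · intro c hc
    rw [mem_compF]
    refine ⟨Finset.mem_union_left _ hc, ?_⟩
    exact Relation.ReflTransGen.mono (fun a b hab =>
      ⟨Finset.mem_union_left _ hab.1, Finset.mem_union_left _ hab.2.1, hab.2.2⟩) _ _ (hC c hc s₀ hs₀C)

end comp

/-! ### The key coefficient identity -/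

lemma ckey {N : ℕ} (E : Fin N → Fin N → Prop) (k : ℕ) (S : Finset (Fin N))
    (hne : S.Nonempty) (hconn : WConn E S) :
    ∑ C ∈ (Finset.univ.powerset.filter
        (fun C : Finset (Fin N) => C.Nonempty ∧ WConn E C)).filter (fun C => S ⊆ C),
      Ibinom ((wNbhd E C).card : ℤ) ((k : ℤ) - C.card) * (-1) ^ (((k:ℤ) - C.card).toNat)
    = if S.card = k then 1 else 0 := by
  obtain ⟨s₀, hs₀⟩ := hne
  set eterm : ℕ → ℤ := fun h => (-1)^(((k:ℤ) - h).toNat) * Ibinom ((N:ℤ) - h) ((k:ℤ) - h)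
    with heterm
  set F := (Finset.univ.powerset.filter
      (fun C : Finset (Fin N) => C.Nonempty ∧ WConn E C)).filter (fun C => S ⊆ C) with hF
  have hmemF : ∀ C, C ∈ F ↔ (C.Nonempty ∧ WConn E C) ∧ S ⊆ C := by
    intro C
    rw [hF, Finset.mem_filter, Finset.mem_filter, Finset.mem_powerset]
    constructor
    · rintro ⟨⟨_, h1⟩, h2⟩; exact ⟨h1, h2⟩
    · rintro ⟨h1, h2⟩; exact ⟨⟨Finset.subset_univ _, h1⟩, h2⟩
  -- Step 1: expand each term over the set of "far" vertices
  have hper : ∀ C ∈ F,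
      Ibinom ((wNbhd E C).card : ℤ) ((k : ℤ) - C.card) * (-1) ^ (((k:ℤ) - C.card).toNat)
      = ∑ R ∈ ((C ∪ wNbhd E C)ᶜ : Finset (Fin N)).powerset, eterm (C.card + R.card) := by
    intro C _
    set M := ((C ∪ wNbhd E C)ᶜ : Finset (Fin N)) with hM
    have hdisj : Disjoint C (wNbhd E C) := by
      rw [Finset.disjoint_left]
      intro a haC haN
      unfold wNbhd at haN
      rw [Finset.mem_filter] at haN
      exact haN.2.1 haC
    have hcards : C.card + (wNbhd E C).card + M.card = N := by
      have h1 : (C ∪ wNbhd E C).card = C.card + (wNbhd E C).card :=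
        Finset.card_union_of_disjoint hdisj
      have h2 : M.card = Fintype.card (Fin N) - (C ∪ wNbhd E C).card :=
        Finset.card_compl _
      have h3 : (C ∪ wNbhd E C).card ≤ Fintype.card (Fin N) :=
        Finset.card_le_univ _
      rw [Fintype.card_fin] at h2 h3
      omega
    rw [sum_powerset_card M (fun c => eterm (C.card + c))]
    have := key_int M.card ((wNbhd E C).card) ((k : ℤ) - C.card)
    rw [mul_comm (Ibinom ((wNbhd E C).card : ℤ) ((k:ℤ) - C.card))
      ((-1) ^ (((k:ℤ) - C.card).toNat)), ← this]
    apply Finset.sum_congr rfl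
    intro j hj
    rw [Finset.mem_range] at hj
    rw [heterm]
    simp only []
    have e1 : (k:ℤ) - (C.card + j : ℕ) = ((k:ℤ) - C.card) - j := by push_cast; ring
    have e2 : (N:ℤ) - (C.card + j : ℕ)
        = ((wNbhd E C).card : ℤ) + ((M.card : ℤ) - j) := by
      have : (N : ℤ) = (C.card : ℤ) + (wNbhd E C).card + M.card := by
        exact_mod_cast congrArg (Nat.cast : ℕ → ℤ) hcards.symm
      push_cast
      rw [this]; ring
    rw [e1, e2]
  rw [Finset.sum_congr rfl hper]
  -- Step 2: regroup as a sum over all supersets of S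
  set G := Finset.univ.powerset.filter (fun H : Finset (Fin N) => S ⊆ H) with hG
  have hmemG : ∀ H, H ∈ G ↔ S ⊆ H := by
    intro H
    rw [hG, Finset.mem_filter, Finset.mem_powerset]
    exact ⟨fun h => h.2, fun h => ⟨Finset.subset_univ _, h⟩⟩
  have hstep2 : ∑ C ∈ F, ∑ R ∈ ((C ∪ wNbhd E C)ᶜ : Finset (Fin N)).powerset,
        eterm (C.card + R.card)
      = ∑ H ∈ G, eterm H.card := by
    rw [Finset.sum_sigma']
    apply Finset.sum_nbij' (fun p => p.1 ∪ p.2)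
      (fun H => ⟨compF E s₀ H, H \ compF E s₀ H⟩)
    · -- forward membership
      rintro ⟨C, R⟩ hp
      rw [Finset.mem_sigma] at hp
      rw [hmemG]
      exact Finset.Subset.trans ((hmemF C).mp hp.1).2 Finset.subset_union_left
    · -- backward membership
      intro H hH
      rw [hmemG] at hH
      rw [Finset.mem_sigma]
      constructor
      · rw [hmemF]
        refine ⟨⟨⟨s₀, ?_⟩, compF_wconn⟩, subset_compF hconn hs₀ hH⟩
        · exact subset_compF hconn hs₀ hH hs₀
      · rw [Finset.mem_powerset]
        intro x hx
        rw [Finset.mem_sdiff] at hx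
        rw [Finset.mem_compl, Finset.mem_union]
        rintro (hx1 | hx2)
        · exact hx.2 hx1
        · unfold wNbhd at hx2
          rw [Finset.mem_filter] at hx2
          obtain ⟨_, hxc, y, hy, he⟩ := hx2
          exact compF_no_edge hx.1 hx.2 hy he
    · -- left inverse
      rintro ⟨C, R⟩ hp
      rw [Finset.mem_sigma] at hp
      obtain ⟨hCF, hR⟩ := hp
      rw [hmemF] at hCF
      rw [Finset.mem_powerset] at hR
      have hRC : ∀ x ∈ R, x ∉ C := by
        intro x hx
        have := hR hx
        rw [Finset.mem_compl, Finset.mem_union] at this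
        tauto
      have hRN : ∀ x ∈ R, x ∉ wNbhd E C := by
        intro x hx
        have := hR hx
        rw [Finset.mem_compl, Finset.mem_union] at this
        tauto
      have h1 : compF E s₀ (C ∪ R) = C :=
        compF_union hCF.1.2 (hCF.2 hs₀) hRC hRN
      have hdisj : Disjoint C R := by
        rw [Finset.disjoint_left]; exact fun a ha hb => hRC a hb ha
      show (⟨compF E s₀ (C ∪ R), (C ∪ R) \ compF E s₀ (C ∪ R)⟩ :
          Σ _ : Finset (Fin N), Finset (Fin N)) = ⟨C, R⟩
      rw [h1, Finset.union_sdiff_cancel_left hdisj]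
    · -- right inverse
      intro H hH
      simp only []
      exact Finset.union_sdiff_of_subset compF_subset
    · -- values agree
      rintro ⟨C, R⟩ hp
      rw [Finset.mem_sigma] at hp
      obtain ⟨hCF, hR⟩ := hp
      rw [Finset.mem_powerset] at hR
      have hdisj : Disjoint C R := by
        rw [Finset.disjoint_left]
        intro a ha hb
        have := hR hb
        rw [Finset.mem_compl, Finset.mem_union] at this
        tauto
      simp only []
      rw [Finset.card_union_of_disjoint hdisj]
  rw [hstep2]
  -- Step 3: evaluate the unrestricted sum
  have hstep3 : ∑ H ∈ G, eterm H.card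
      = ∑ R ∈ (Sᶜ : Finset (Fin N)).powerset, eterm (S.card + R.card) := by
    apply Finset.sum_nbij' (fun H => H \ S) (fun R => S ∪ R)
    · intro H hH
      rw [Finset.mem_powerset]
      intro x hx
      rw [Finset.mem_sdiff] at hx
      rw [Finset.mem_compl]
      exact hx.2
    · intro R hR
      rw [hmemG]
      exact Finset.subset_union_left
    · intro H hH
      rw [hmemG] at hH
      exact Finset.union_sdiff_of_subset hH
    · intro R hR
      rw [Finset.mem_powerset] at hR
      apply Finset.union_sdiff_cancel_left
      rw [Finset.disjoint_left]
      intro a ha hb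
      have := hR hb
      rw [Finset.mem_compl] at this
      exact this ha
    · intro H hH
      rw [hmemG] at hH
      congr 1
      have hdisj : Disjoint S (H \ S) := Finset.disjoint_sdiff
      rw [← Finset.card_union_of_disjoint hdisj, Finset.union_sdiff_of_subset hH]
  rw [hstep3, sum_powerset_card (Sᶜ : Finset (Fin N)) (fun c => eterm (S.card + c))]
  have hcardc : (Sᶜ : Finset (Fin N)).card + S.card = N := by
    have h2 : (Sᶜ : Finset (Fin N)).card = Fintype.card (Fin N) - S.card :=
      Finset.card_compl _
    have h3 : S.card ≤ Fintype.card (Fin N) := Finset.card_le_univ _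
    rw [Fintype.card_fin] at h2 h3
    omega
  have := key_int (Sᶜ : Finset (Fin N)).card 0 ((k : ℤ) - S.card)
  rw [show ((0:ℕ):ℤ) = 0 by norm_num] at this
  have hmatch : ∑ j ∈ Finset.range ((Sᶜ : Finset (Fin N)).card+1),
      ((Sᶜ : Finset (Fin N)).card.choose j : ℤ) * eterm (S.card + j)
      = ∑ j ∈ Finset.range ((Sᶜ : Finset (Fin N)).card+1),
        ((Sᶜ : Finset (Fin N)).card.choose j : ℤ) *
          ((-1)^((((k:ℤ) - S.card) - j).toNat) *
            Ibinom (0 + (((Sᶜ : Finset (Fin N)).card : ℤ) - j)) (((k:ℤ) - S.card) - j)) := by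
    apply Finset.sum_congr rfl
    intro j hj
    rw [heterm]
    simp only []
    have e1 : (k:ℤ) - (S.card + j : ℕ) = ((k:ℤ) - S.card) - j := by push_cast; ring
    have e2 : (N:ℤ) - (S.card + j : ℕ)
        = 0 + (((Sᶜ : Finset (Fin N)).card : ℤ) - j) := by
      have : ((Sᶜ : Finset (Fin N)).card : ℤ) + S.card = N := by exact_mod_cast hcardc
      push_cast
      omega
    rw [e1, e2]
  rw [hmatch, this]
  -- final evaluation
  by_cases hSk : S.card = k
  · rw [if_pos hSk, hSk]
    simp only [sub_self]
    unfold Ibinom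
    norm_num
  · rw [if_neg hSk]
    have : Ibinom 0 ((k:ℤ) - S.card) = 0 := by
      unfold Ibinom
      rw [if_neg]
      intro ⟨h1, h2⟩
      have : (S.card : ℤ) = k := by omega
      exact hSk (by exact_mod_cast this)
    rw [this, mul_zero]

/-! ### Walk supports -/

noncomputable def suppF {N k : ℕ} (w : Fin (k+1) → Fin N) : Finset (Fin N) :=
  Finset.image w Finset.univ

lemma mem_suppF {N k : ℕ} {w : Fin (k+1) → Fin N} {x : Fin N} :
    x ∈ suppF w ↔ ∃ m, w m = x := by
  unfold suppF; simp

lemma suppF_wconn {N k : ℕ} {E : Fin N → Fin N → Prop} {w : Fin (k+1) → Fin N}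
    (he : ∀ m : Fin k, E (w m.castSucc) (w m.succ)) : WConn E (suppF w) := by
  have haux : ∀ (v : ℕ) (hv : v < k + 1), Relation.ReflTransGen
      (fun a b => a ∈ suppF w ∧ b ∈ suppF w ∧ (E a b ∨ E b a)) (w 0) (w ⟨v, hv⟩) := by
    intro v
    induction v with
    | zero =>
      intro hv
      have h0 : (⟨0, hv⟩ : Fin (k+1)) = 0 := by ext; simp
      rw [h0]
    | succ v IHv =>
      intro hv
      have hvk : v < k := by omega
      have hvk1 : v < k + 1 := by omega
      have hedge : E (w ⟨v, hvk1⟩) (w ⟨v+1, hv⟩) := by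
        have := he ⟨v, hvk⟩
        have h1 : (⟨v, hvk⟩ : Fin k).castSucc = ⟨v, hvk1⟩ := rfl
        have h2 : (⟨v, hvk⟩ : Fin k).succ = ⟨v+1, hv⟩ := rfl
        rw [h1, h2] at this
        exact this
      refine (IHv hvk1).tail ?_
      exact ⟨Finset.mem_image_of_mem w (Finset.mem_univ _),
        Finset.mem_image_of_mem w (Finset.mem_univ _), Or.inl hedge⟩
  intro a ha b hb
  rw [mem_suppF] at ha hb
  obtain ⟨ma, rfl⟩ := ha
  obtain ⟨mb, rfl⟩ := hb
  have hsym : Symmetric (fun a b =>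
      a ∈ suppF w ∧ b ∈ suppF w ∧ (E a b ∨ E b a)) := by
    rintro a b ⟨h1, h2, h3⟩; exact ⟨h2, h1, h3.symm⟩
  have h1 := haux ma.val ma.isLt
  have h2 := haux mb.val mb.isLt
  have hma : (⟨ma.val, ma.isLt⟩ : Fin (k+1)) = ma := rfl
  have hmb : (⟨mb.val, mb.isLt⟩ : Fin (k+1)) = mb := rfl
  rw [hma] at h1
  rw [hmb] at h2
  exact ((@Relation.ReflTransGen.stdSymm _ _ ⟨fun a b h => hsym h⟩).symm _ _ h1).trans h2

lemma walks_restrict {N : ℕ} (E : Fin N → Fin N → Prop) (C : Finset (Fin N))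
    {k : ℕ} (hk : 1 ≤ k) (i : Fin N) :
    walksTo (fun a b => (a ∈ C ∧ b ∈ C) ∧ E a b) k i i
    = (walksTo E k i i).filter (fun w => suppF w ⊆ C) := by
  ext w
  rw [Finset.mem_filter, mem_walksTo, mem_walksTo]
  constructor
  · rintro ⟨h0, hl, he⟩
    refine ⟨⟨h0, hl, fun m => (he m).2⟩, ?_⟩
    intro x hx
    rw [mem_suppF] at hx
    obtain ⟨m, rfl⟩ := hx
    by_cases hm : (m : ℕ) < k
    · have hcs : (⟨(m : ℕ), hm⟩ : Fin k).castSucc = m := by ext; simp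
      rw [← hcs]
      exact (he ⟨(m : ℕ), hm⟩).1.1
    · have hm' : m = Fin.last k := by
        ext
        have := m.isLt
        simp only [Fin.val_last]
        omega
      rw [hm', hl, ← h0]
      have h0' : (0 : Fin (k+1)) = (⟨0, hk⟩ : Fin k).castSucc := by ext; simp
      rw [h0']
      exact (he ⟨0, hk⟩).1.1
  · rintro ⟨⟨h0, hl, he⟩, hsub⟩
    refine ⟨h0, hl, fun m => ⟨⟨?_, ?_⟩, he m⟩⟩
    · exact hsub (Finset.mem_image_of_mem w (Finset.mem_univ _))
    · exact hsub (Finset.mem_image_of_mem w (Finset.mem_univ _))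

lemma inj_iff_card {N k : ℕ} (hk : 1 ≤ k) {i : Fin N} {w : Fin (k+1) → Fin N}
    (h0 : w 0 = i) (hl : w (Fin.last k) = i) :
    (∀ a b : Fin k, w a.castSucc = w b.castSucc → a = b) ↔ (suppF w).card = k := by
  have himg : suppF w = Finset.image (fun m : Fin k => w m.castSucc) Finset.univ := by
    ext x
    rw [mem_suppF, Finset.mem_image]
    constructor
    · rintro ⟨m, rfl⟩
      by_cases hm : (m : ℕ) < k
      · refine ⟨⟨(m : ℕ), hm⟩, Finset.mem_univ _, ?_⟩
        congr 1
      · have hm' : m = Fin.last k := by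
          ext
          have := m.isLt
          simp only [Fin.val_last]
          omega
        refine ⟨⟨0, hk⟩, Finset.mem_univ _, ?_⟩
        rw [hm', hl, ← h0]
        congr 1
    · rintro ⟨m, _, rfl⟩
      exact ⟨m.castSucc, rfl⟩
  rw [himg]
  constructor
  · intro hinj
    rw [Finset.card_image_of_injective _ (fun a b hab => hinj a b hab)]
    simp
  · intro hcard a b hab
    have hinj : Set.InjOn (fun m : Fin k => w m.castSucc)
        (Finset.univ : Finset (Fin k)) := by
      apply Finset.injOn_of_card_image_eq
      rw [hcard]; simp
    exact hinj (Finset.mem_coe.mpr (Finset.mem_univ a))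
      (Finset.mem_coe.mpr (Finset.mem_univ b)) hab

/-! ### Main theorem -/

theorem stmt10 (N : ℕ) (E : Fin N → Fin N → Prop)
    (A : Matrix (Fin N) (Fin N) ℤ) (hA : ∀ i j, A i j = if E i j then 1 else 0)
    (k : ℕ) (hk : 1 ≤ k) (i : Fin N) :
    (Nat.card {w : Fin (k + 1) → Fin N //
        w 0 = i ∧ w (Fin.last k) = i ∧ (∀ m : Fin k, E (w m.castSucc) (w m.succ)) ∧
        ∀ a b : Fin k, w a.castSucc = w b.castSucc → a = b} : ℤ)
      = ∑ C ∈ Finset.univ.powerset.filter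
            (fun C : Finset (Fin N) => C.Nonempty ∧ WConn E C),
          Ibinom ((wNbhd E C).card : ℤ) ((k : ℤ) - C.card) *
            (-1) ^ ((k : ℤ) - C.card).toNat * (restrict A C ^ k) i i := by
  set fam := Finset.univ.powerset.filter
    (fun C : Finset (Fin N) => C.Nonempty ∧ WConn E C) with hfam
  set W := walksTo E k i i with hW
  -- LHS as a Finset card
  have hLHS : (Nat.card {w : Fin (k + 1) → Fin N //
      w 0 = i ∧ w (Fin.last k) = i ∧ (∀ m : Fin k, E (w m.castSucc) (w m.succ)) ∧
      ∀ a b : Fin k, w a.castSucc = w b.castSucc → a = b})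
      = (W.filter (fun w => (suppF w).card = k)).card := by
    rw [Nat.card_eq_fintype_card, Fintype.card_subtype]
    congr 1
    ext w
    simp only [Finset.mem_filter, Finset.mem_univ, true_and, hW, mem_walksTo]
    constructor
    · rintro ⟨h0, hl, he, hinj⟩
      exact ⟨⟨h0, hl, he⟩, (inj_iff_card hk h0 hl).mp hinj⟩
    · rintro ⟨⟨h0, hl, he⟩, hcard⟩
      exact ⟨h0, hl, he, (inj_iff_card hk h0 hl).mpr hcard⟩
  rw [hLHS]
  -- rewrite each matrix power as a walk count
  have hterm : ∀ C ∈ fam,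
      Ibinom ((wNbhd E C).card : ℤ) ((k : ℤ) - C.card) *
        (-1) ^ ((k : ℤ) - C.card).toNat * (restrict A C ^ k) i i
      = ∑ w ∈ W, (if suppF w ⊆ C then
          Ibinom ((wNbhd E C).card : ℤ) ((k : ℤ) - C.card) *
            (-1) ^ ((k : ℤ) - C.card).toNat else 0) := by
    intro C _
    rw [count_walks (fun a b => (a ∈ C ∧ b ∈ C) ∧ E a b) (restrict A C)
      (by
        intro a b
        unfold restrict
        rw [hA]
        by_cases h1 : a ∈ C ∧ b ∈ C
        · by_cases h2 : E a b
          · rw [if_pos h1, if_pos h2, if_pos ⟨h1, h2⟩]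
          · rw [if_pos h1, if_neg h2, if_neg (by tauto)]
        · rw [if_neg h1, if_neg (by tauto)]) k i i,
      walks_restrict E C hk i, ← hW]
    rw [← Finset.sum_boole]
    rw [Finset.mul_sum]
    apply Finset.sum_congr rfl
    intro w _
    rw [mul_ite, mul_one, mul_zero]
  rw [Finset.sum_congr rfl hterm, Finset.sum_comm]
  have hinner : ∀ w ∈ W,
      ∑ C ∈ fam, (if suppF w ⊆ C then
          Ibinom ((wNbhd E C).card : ℤ) ((k : ℤ) - C.card) *
            (-1) ^ ((k : ℤ) - C.card).toNat else 0)
      = if (suppF w).card = k then 1 else 0 := by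
    intro w hw
    rw [← Finset.sum_filter]
    rw [hW, mem_walksTo] at hw
    obtain ⟨h0, hl, he⟩ := hw
    have hne : (suppF w).Nonempty := ⟨w 0, Finset.mem_image_of_mem w (Finset.mem_univ _)⟩
    exact ckey E k (suppF w) hne (suppF_wconn he)
  rw [Finset.sum_congr rfl hinner, Finset.sum_boole]
end
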